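/- Let w be a weight on ℝ, let M denote the uncentered Hardy–Littlewood maximal operator on ℝ, and suppose that for every bounded interval I and every measurable E ⊆ I we have w(E)/w(I) ≤ 2 (|E|/|I|)^{1/β} for some β ≥ 1. Let E ⊆ ℝ be measurable with 0 < |E| < ∞ and let 0 ≤ γ < α < 1 satisfy (1-α)/(1-γ) < 4^{-β}. Then w({x ∈ ℝ : M(1_E + γ·1_{E^c})(x) > α}) ≤ (1 - 4((1-α)/(1-γ))^{1/β})^{-1} · w(E). -/

import Mathlib

open MeasureTheory Set
open scoped ENNReal NNReal
open scoped Classical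

/-- The uncentered one-dimensional Hardy–Littlewood maximal operator (Lebesgue measure). -/
noncomputable def MHL (f : ℝ → ℝ) (x : ℝ) : ℝ :=
  sSup {r : ℝ | ∃ a b : ℝ, a < b ∧ x ∈ Set.Ioo a b ∧
    r = (b - a)⁻¹ * ∫ y in Set.Ioo a b, |f y|}

-- triple lemma
lemma mid_subset {a1 b1 a2 b2 a3 b3 x : ℝ} (h1 : x ∈ Ioo a1 b1) (h2 : x ∈ Ioo a2 b2)
    (h3 : x ∈ Ioo a3 b3) (ha : a1 ≤ a2) (ha' : a2 ≤ a3) :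
    Ioo a2 b2 ⊆ Ioo a1 b1 ∪ Ioo a3 b3 ∨ Ioo a3 b3 ⊆ Ioo a2 b2 := by
  rcases le_or_gt b2 b1 with hb | hb
  · exact Or.inl fun y hy => Or.inl ⟨lt_of_le_of_lt ha hy.1, hy.2.trans_le hb⟩
  rcases le_or_gt b3 b2 with hb' | hb'
  · exact Or.inr fun y hy => ⟨lt_of_le_of_lt ha' hy.1, hy.2.trans_le hb'⟩
  · refine Or.inl fun y hy => ?_
    rcases lt_or_ge a3 y with h | h
    · exact Or.inr ⟨h, hy.2.trans hb'⟩
    · exact Or.inl ⟨lt_of_le_of_lt ha hy.1, lt_of_le_of_lt h (h3.1.trans h1.2)⟩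

lemma triple_lemma {a1 b1 a2 b2 a3 b3 x : ℝ} (h1 : x ∈ Ioo a1 b1) (h2 : x ∈ Ioo a2 b2)
    (h3 : x ∈ Ioo a3 b3) :
    Ioo a1 b1 ⊆ Ioo a2 b2 ∪ Ioo a3 b3 ∨ Ioo a2 b2 ⊆ Ioo a1 b1 ∪ Ioo a3 b3 ∨
      Ioo a3 b3 ⊆ Ioo a1 b1 ∪ Ioo a2 b2 := by
  rcases le_total a1 a2 with h12 | h21
  · rcases le_total a2 a3 with h23 | h32
    · rcases mid_subset h1 h2 h3 h12 h23 with h | h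
      · exact Or.inr (Or.inl h)
      · exact Or.inr (Or.inr (h.trans subset_union_right))
    · rcases le_total a1 a3 with h13 | h31
      · rcases mid_subset h1 h3 h2 h13 h32 with h | h
        · exact Or.inr (Or.inr (fun y hy => (h hy).elim Or.inl Or.inr))
        · exact Or.inr (Or.inl (h.trans subset_union_right))
      · rcases mid_subset h3 h1 h2 h31 h12 with h | h
        · exact Or.inl (fun y hy => (h hy).elim Or.inr Or.inl)
        · exact Or.inr (Or.inl (h.trans subset_union_left))
  · rcases le_total a1 a3 with h13 | h31
    · rcases mid_subset h2 h1 h3 h21 h13 with h | h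
      · exact Or.inl (fun y hy => (h hy).elim (fun h' => Or.inl h') (fun h' => Or.inr h'))
      · exact Or.inr (Or.inr (h.trans subset_union_left))
    · rcases le_total a2 a3 with h23 | h32
      · rcases mid_subset h2 h3 h1 h23 h31 with h | h
        · exact Or.inr (Or.inr (fun y hy => (h hy).elim Or.inr Or.inl))
        · exact Or.inl (h.trans subset_union_right)
      · rcases mid_subset h3 h2 h1 h32 h21 with h | h
        · exact Or.inr (Or.inl (fun y hy => (h hy).elim Or.inr Or.inl))
        · exact Or.inl (h.trans subset_union_left)

lemma exists_min_subcover (S : Set ℝ) (F : Finset (ℝ × ℝ))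
    (hcov : S ⊆ ⋃ p ∈ F, Ioo p.1 p.2) :
    ∃ F' ⊆ F, (S ⊆ ⋃ p ∈ F', Ioo p.1 p.2) ∧
      ∀ p ∈ F', ¬ (S ⊆ ⋃ q ∈ F'.erase p, Ioo q.1 q.2) := by
  classical
  induction F using Finset.strongInduction with
  | _ F ih =>
    by_cases h : ∃ p ∈ F, S ⊆ ⋃ q ∈ F.erase p, Ioo q.1 q.2
    · obtain ⟨p, hp, hcov'⟩ := h
      obtain ⟨F', h1, h2, h3⟩ := ih (F.erase p) (Finset.erase_ssubset hp) hcov'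
      exact ⟨F', h1.trans (Finset.erase_subset _ _), h2, h3⟩
    · exact ⟨F, le_refl _, hcov, fun p hp hc => h ⟨p, hp, hc⟩⟩

lemma overlap_two (S : Set ℝ) (F : Finset (ℝ × ℝ)) (hcov : S ⊆ ⋃ p ∈ F, Ioo p.1 p.2)
    (hirr : ∀ p ∈ F, ¬ (S ⊆ ⋃ q ∈ F.erase p, Ioo q.1 q.2)) (x : ℝ) :
    (F.filter (fun p => x ∈ Ioo p.1 p.2)).card ≤ 2 := by
  classical
  by_contra h
  push_neg at h
  rw [Finset.two_lt_card_iff] at h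
  obtain ⟨p, q, r, hp, hq, hr, hpq, hpr, hqr⟩ := h
  simp only [Finset.mem_filter] at hp hq hr
  have key : ∀ p' q' r' : ℝ × ℝ, p' ∈ F → x ∈ Ioo p'.1 p'.2 → q' ≠ p' → r' ≠ p' →
      q' ∈ F → r' ∈ F → Ioo p'.1 p'.2 ⊆ Ioo q'.1 q'.2 ∪ Ioo r'.1 r'.2 → False := by
    intro p' q' r' hp' hxp' hqp' hrp' hq' hr' hsub
    refine hirr p' hp' (fun y hy => ?_)
    have := hcov hy
    simp only [mem_iUnion, Finset.mem_erase] at this ⊢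
    obtain ⟨s, hs, hys⟩ := this
    by_cases hsp : s = p'
    · subst hsp
      rcases hsub hys with h' | h'
      · exact ⟨q', ⟨hqp', hq'⟩, h'⟩
      · exact ⟨r', ⟨hrp', hr'⟩, h'⟩
    · exact ⟨s, ⟨hsp, hs⟩, hys⟩
  rcases triple_lemma (a1 := p.1) (b1 := p.2) (a2 := q.1) (b2 := q.2) (a3 := r.1) (b3 := r.2)
      hp.2 hq.2 hr.2 with h' | h' | h'
  · exact key p q r hp.1 hp.2 hpq.symm hpr.symm hq.1 hr.1 h'
  · exact key q p r hq.1 hq.2 hpq hqr.symm hp.1 hr.1 h'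
  · exact key r p q hr.1 hr.2 hpr hqr hp.1 hq.1 h'

lemma sum_length_le (F : Finset (ℝ × ℝ)) (c d : ℝ)
    (hsub : ∀ p ∈ F, Ioo p.1 p.2 ⊆ Ioo c d)
    (hover : ∀ x : ℝ, (F.filter (fun p => x ∈ Ioo p.1 p.2)).card ≤ 2) :
    ∑ p ∈ F, volume (Ioo p.1 p.2) ≤ 2 * volume (Ioo c d) := by
  classical
  have h1 : ∀ p : ℝ × ℝ, volume (Ioo p.1 p.2) = ∫⁻ x, (Ioo p.1 p.2).indicator (fun _ => (1 : ℝ≥0∞)) x := by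
    intro p
    rw [lintegral_indicator measurableSet_Ioo, setLIntegral_one]
  calc ∑ p ∈ F, volume (Ioo p.1 p.2)
      = ∫⁻ x, ∑ p ∈ F, (Ioo p.1 p.2).indicator (fun _ => (1 : ℝ≥0∞)) x := by
        rw [lintegral_finset_sum]
        · simp_rw [h1]
        · exact fun p _ => measurable_const.indicator measurableSet_Ioo
    _ ≤ ∫⁻ x, (2 : ℝ≥0∞) * (Ioo c d).indicator (fun _ => (1 : ℝ≥0∞)) x := by
        refine lintegral_mono (fun x => ?_)
        by_cases hx : x ∈ Ioo c d
        · have : ∑ p ∈ F, (Ioo p.1 p.2).indicator (fun _ => (1 : ℝ≥0∞)) x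
              = ((F.filter (fun p => x ∈ Ioo p.1 p.2)).card : ℝ≥0∞) := by
            rw [Finset.card_filter]
            push_cast
            refine Finset.sum_congr rfl (fun p _ => ?_)
            by_cases h : x ∈ Ioo p.1 p.2 <;> simp [h, Set.indicator]
          rw [this, Set.indicator_of_mem hx, mul_one]
          exact (by exact_mod_cast hover x :
            (((F.filter (fun p => x ∈ Ioo p.1 p.2)).card : ℝ≥0∞)) ≤ 2)
        · have : ∀ p ∈ F, (Ioo p.1 p.2).indicator (fun _ => (1 : ℝ≥0∞)) x = 0 := by
            intro p hp
            exact Set.indicator_of_notMem (fun hxp => hx (hsub p hp hxp)) _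
          rw [Finset.sum_congr rfl this, Finset.sum_const_zero]
          exact zero_le
    _ = 2 * volume (Ioo c d) := by
        rw [lintegral_const_mul _ (measurable_const.indicator measurableSet_Ioo),
          lintegral_indicator measurableSet_Ioo, setLIntegral_one]

lemma cover_bound (S E : Set ℝ) (c d ρ : ℝ) (F : Finset (ℝ × ℝ))
    (hsub : ∀ p ∈ F, Ioo p.1 p.2 ⊆ Ioo c d)
    (hsm : ∀ p ∈ F, volume (Ioo p.1 p.2 \ E) ≤ ENNReal.ofReal ρ * volume (Ioo p.1 p.2))
    (hcov : S ⊆ ⋃ p ∈ F, Ioo p.1 p.2) :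
    volume (S \ E) ≤ 2 * ENNReal.ofReal ρ * volume (Ioo c d) := by
  classical
  obtain ⟨F', hF'F, hcov', hirr⟩ := exists_min_subcover S F hcov
  have hover := overlap_two S F' hcov' hirr
  calc volume (S \ E) ≤ volume (⋃ p ∈ F', Ioo p.1 p.2 \ E) := by
        refine measure_mono (fun y hy => ?_)
        obtain ⟨p, hp, hyp⟩ := by simpa only [mem_iUnion] using hcov' hy.1
        exact mem_iUnion.mpr ⟨p, mem_iUnion.mpr ⟨hp, hyp, hy.2⟩⟩
    _ ≤ ∑ p ∈ F', volume (Ioo p.1 p.2 \ E) := measure_biUnion_finset_le _ _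
    _ ≤ ∑ p ∈ F', ENNReal.ofReal ρ * volume (Ioo p.1 p.2) :=
        Finset.sum_le_sum (fun p hp => hsm p (hF'F hp))
    _ = ENNReal.ofReal ρ * ∑ p ∈ F', volume (Ioo p.1 p.2) := by rw [Finset.mul_sum]
    _ ≤ ENNReal.ofReal ρ * (2 * volume (Ioo c d)) :=
        mul_le_mul_right (sum_length_le F' c d (fun p hp => hsub p (hF'F hp)) hover) _
    _ = 2 * ENNReal.ofReal ρ * volume (Ioo c d) := by ring

section
variable {E : Set ℝ} {α γ : ℝ} {f : ℝ → ℝ}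

lemma f_integral (hE : MeasurableSet E) (hf : ∀ y, f y = if y ∈ E then 1 else γ)
    {a b : ℝ} (hab : a < b) :
    IntegrableOn f (Ioo a b) ∧
      ∫ y in Ioo a b, f y
        = γ * (b - a) + (1 - γ) * (volume (Ioo a b ∩ E)).toReal := by
  have hvol : volume (Ioo a b) < ⊤ := by rw [Real.volume_Ioo]; exact ENNReal.ofReal_lt_top
  have hfeq : f = fun y => γ + (1 - γ) * E.indicator 1 y := by
    funext y
    by_cases h : y ∈ E <;> simp [hf y, h]
  have hgi : IntegrableOn (fun y => E.indicator (1 : ℝ → ℝ) y) (Ioo a b) := by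
    rw [IntegrableOn, integrable_indicator_iff hE]
    refine (integrableOn_const_iff).mpr (Or.inr ?_)
    rw [Measure.restrict_apply hE]
    exact lt_of_le_of_lt (measure_mono inter_subset_right) hvol
  have hgint : ∫ y in Ioo a b, E.indicator (1 : ℝ → ℝ) y
      = (volume (Ioo a b ∩ E)).toReal := by
    rw [setIntegral_indicator hE]
    simp [Real.volume_Ioo, measureReal_def]
  constructor
  · rw [hfeq]
    exact (integrableOn_const hvol.ne).add (hgi.const_mul _)
  · rw [hfeq]
    rw [integral_add (integrableOn_const (C := γ) hvol.ne) (hgi.const_mul _),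
      integral_const_mul, hgint, setIntegral_const, measureReal_def]
    rw [Real.volume_Ioo, ENNReal.toReal_ofReal (by linarith)]
    simp only [smul_eq_mul]
    ring

lemma f_abs (hγ : 0 ≤ γ) (hγ1 : γ ≤ 1) (hf : ∀ y, f y = if y ∈ E then 1 else γ) (y : ℝ) :
    |f y| = f y ∧ f y ≤ 1 := by
  rw [hf y]; by_cases h : y ∈ E <;> simp [h, abs_of_nonneg, hγ, hγ1]

lemma MHL_bddAbove (hE : MeasurableSet E) (hγ : 0 ≤ γ) (hγ1 : γ ≤ 1)
    (hf : ∀ y, f y = if y ∈ E then 1 else γ) (y : ℝ) :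
    BddAbove {r : ℝ | ∃ a b : ℝ, a < b ∧ y ∈ Set.Ioo a b ∧
      r = (b - a)⁻¹ * ∫ z in Set.Ioo a b, |f z|} := by
  refine ⟨1, fun r hr => ?_⟩
  obtain ⟨a, b, hab, -, rfl⟩ := hr
  have hvol : volume (Ioo a b) < ⊤ := by rw [Real.volume_Ioo]; exact ENNReal.ofReal_lt_top
  have hint : ∫ z in Ioo a b, |f z| ≤ b - a := by
    have h1 : ∫ z in Ioo a b, |f z| ≤ ∫ z in Ioo a b, (1 : ℝ) := by
      refine setIntegral_mono_on ((f_integral hE hf hab).1.abs)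
        (integrableOn_const hvol.ne) measurableSet_Ioo (fun z _ => ?_)
      rw [(f_abs hγ hγ1 hf z).1]
      exact (f_abs hγ hγ1 hf z).2
    rw [setIntegral_const, measureReal_def, Real.volume_Ioo,
      ENNReal.toReal_ofReal (le_of_lt (sub_pos.mpr hab)), smul_eq_mul, mul_one] at h1
    exact h1
  calc (b - a)⁻¹ * ∫ z in Ioo a b, |f z| ≤ (b - a)⁻¹ * (b - a) :=
        mul_le_mul_of_nonneg_left hint (inv_nonneg.mpr (by linarith))
    _ = 1 := inv_mul_cancel₀ (by linarith)

lemma MHL_nonempty (y : ℝ) :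
    Set.Nonempty {r : ℝ | ∃ a b : ℝ, a < b ∧ y ∈ Set.Ioo a b ∧
      r = (b - a)⁻¹ * ∫ z in Set.Ioo a b, |f z|} :=
  ⟨_, y - 1, y + 1, by linarith, ⟨by linarith, by linarith⟩, rfl⟩

lemma key_interval (hE : MeasurableSet E) (h1 : volume E < ⊤)
    (hγ : 0 ≤ γ) (hγα : γ < α) (hα : α < 1)
    (hf : ∀ y, f y = if y ∈ E then 1 else γ) {x : ℝ} (hx : α < MHL f x) :
    ∃ a b : ℝ, a < b ∧ x ∈ Ioo a b ∧ (∀ y ∈ Ioo a b, α < MHL f y) ∧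
      b - a ≤ (1 - γ) * (volume E).toReal / (α - γ) + 1 ∧
      volume (Ioo a b \ E) ≤ ENNReal.ofReal ((1 - α) / (1 - γ)) * volume (Ioo a b) := by
  have hγ1 : γ ≤ 1 := le_of_lt (hγα.trans hα)
  obtain ⟨r, hrS, hαr⟩ := exists_lt_of_lt_csSup (MHL_nonempty (f := f) x) hx
  obtain ⟨a, b, hab, hxab, rfl⟩ := hrS
  have hba : (0:ℝ) < b - a := sub_pos.mpr hab
  have habs : ∫ z in Ioo a b, |f z| = ∫ z in Ioo a b, f z :=
    integral_congr_ae (Filter.Eventually.of_forall (fun z => (f_abs hγ hγ1 hf z).1))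
  have hint := (f_integral hE hf hab).2
  have hgt : α * (b - a) < ∫ z in Ioo a b, f z := by
    rw [habs] at hαr
    calc α * (b - a) < ((b - a)⁻¹ * ∫ z in Ioo a b, f z) * (b - a) :=
          mul_lt_mul_of_pos_right hαr hba
      _ = ∫ z in Ioo a b, f z := by field_simp
  set m := (volume (Ioo a b ∩ E)).toReal with hm
  have hmfin : volume (Ioo a b ∩ E) < ⊤ :=
    lt_of_le_of_lt (measure_mono inter_subset_right) h1
  have hkey : (α - γ) * (b - a) < (1 - γ) * m := by
    rw [hint] at hgt; nlinarith
  have hm0 : 0 ≤ m := ENNReal.toReal_nonneg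
  refine ⟨a, b, hab, hxab, ?_, ?_, ?_⟩
  · intro y hy
    calc α < (b - a)⁻¹ * ∫ z in Ioo a b, |f z| := hαr
      _ ≤ MHL f y := le_csSup (MHL_bddAbove hE hγ hγ1 hf y) ⟨a, b, hab, hy, rfl⟩
  · have hmle : m ≤ (volume E).toReal :=
      ENNReal.toReal_mono (ne_of_lt h1) (measure_mono inter_subset_right)
    have h2 : (α - γ) * (b - a) < (1 - γ) * (volume E).toReal := by nlinarith
    have hb : b - a < (1 - γ) * (volume E).toReal / (α - γ) :=
      (lt_div_iff₀ (by linarith)).mpr (by linarith [h2])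
    linarith
  · have hsplit : volume (Ioo a b ∩ E) + volume (Ioo a b \ E) = volume (Ioo a b) :=
      measure_inter_add_diff _ hE
    have hdfin : volume (Ioo a b \ E) < ⊤ := by
      refine lt_of_le_of_lt (measure_mono diff_subset) ?_
      rw [Real.volume_Ioo]; exact ENNReal.ofReal_lt_top
    set n := (volume (Ioo a b \ E)).toReal with hn
    have hmn : m + n = b - a := by
      have h3 := congrArg ENNReal.toReal hsplit
      rwa [ENNReal.toReal_add (ne_of_lt hmfin) (ne_of_lt hdfin), Real.volume_Ioo,
        ENNReal.toReal_ofReal (le_of_lt hba)] at h3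
    have hnle : n ≤ (1 - α) / (1 - γ) * (b - a) := by
      rw [div_mul_eq_mul_div, le_div_iff₀ (by linarith)]
      nlinarith
    calc volume (Ioo a b \ E) = ENNReal.ofReal n :=
          (ENNReal.ofReal_toReal (ne_of_lt hdfin)).symm
      _ ≤ ENNReal.ofReal ((1 - α) / (1 - γ) * (b - a)) := ENNReal.ofReal_le_ofReal hnle
      _ = ENNReal.ofReal ((1 - α) / (1 - γ)) * volume (Ioo a b) := by
          rw [ENNReal.ofReal_mul (div_nonneg (by linarith) (by linarith)), Real.volume_Ioo]

end

set_option maxHeartbeats 1600000 in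
/-- weighted one-dimensional Solyanik estimate. -/
theorem stmt5 (w : ℝ → ℝ) (hw : ∀ x, 0 ≤ w x) (hmeas : Measurable w)
    (hloc : LocallyIntegrable w volume) (β : ℝ) (hβ : 1 ≤ β)
    (habs : ∀ a b : ℝ, a < b → ∀ E ⊆ Set.Ioo a b, MeasurableSet E →
      (∫⁻ x in E, ENNReal.ofReal (w x)) ≤
        ENNReal.ofReal (2 * ((volume E).toReal / (b - a)) ^ (1 / β)) *
          ∫⁻ x in Set.Ioo a b, ENNReal.ofReal (w x))
    (E : Set ℝ) (hE : MeasurableSet E) (h0 : 0 < volume E) (h1 : volume E < ⊤)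
    (α γ : ℝ) (hγ : 0 ≤ γ) (hγα : γ < α) (hα : α < 1)
    (hsmall : (1 - α) / (1 - γ) < (4 : ℝ) ^ (-β)) :
    (∫⁻ x in {x | α < MHL (fun y => E.indicator 1 y + γ * Eᶜ.indicator 1 y) x},
        ENNReal.ofReal (w x)) ≤
      ENNReal.ofReal ((1 - 4 * ((1 - α) / (1 - γ)) ^ (1 / β))⁻¹) *
        ∫⁻ x in E, ENNReal.ofReal (w x) := by
  classical
  set f : ℝ → ℝ := fun y => E.indicator 1 y + γ * Eᶜ.indicator 1 y with hfdef
  have hfval : ∀ y, f y = if y ∈ E then 1 else γ := by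
    intro y; by_cases h : y ∈ E <;> simp [hfdef, h]
  set ρ : ℝ := (1 - α) / (1 - γ) with hρdef
  have hγ1 : γ < 1 := hγα.trans hα
  have hρ0 : 0 ≤ ρ := div_nonneg (by linarith) (by linarith)
  have hβ0 : (0:ℝ) < β := by linarith
  have h4β : (4:ℝ) ^ (-β) ≤ 1/4 := by
    calc (4:ℝ)^(-β) ≤ (4:ℝ)^(-1:ℝ) :=
          Real.rpow_le_rpow_of_exponent_le (by norm_num) (by linarith)
      _ = 1/4 := by rw [Real.rpow_neg_one]; norm_num
  have hρ14 : ρ < 1/4 := hsmall.trans_le h4β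
  set δ : ℝ := ρ ^ (1/β) with hδdef
  have hδ0 : 0 ≤ δ := Real.rpow_nonneg hρ0 _
  have hδ14 : δ < 1/4 := by
    have h2 : ρ ^ (1/β) < ((4:ℝ)^(-β)) ^ (1/β) :=
      Real.rpow_lt_rpow hρ0 hsmall (by positivity)
    have h3 : ((4:ℝ)^(-β)) ^ (1/β) = 1/4 := by
      rw [← Real.rpow_mul (by norm_num : (0:ℝ) ≤ 4)]
      have h4 : -β * (1/β) = -1 := by field_simp
      rw [h4, Real.rpow_neg_one]; norm_num
    rw [hδdef]; rw [h3] at h2; exact h2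
  have h4δ : 4 * δ < 1 := by linarith
  have hcoef : 2 * (2*ρ)^(1/β) ≤ 4 * δ := by
    rw [Real.mul_rpow (by norm_num) hρ0]
    have h2le : (2:ℝ)^(1/β) ≤ 2 := by
      calc (2:ℝ)^(1/β) ≤ (2:ℝ)^(1:ℝ) :=
            Real.rpow_le_rpow_of_exponent_le (by norm_num)
              ((div_le_one hβ0).mpr hβ)
        _ = 2 := Real.rpow_one 2
    nlinarith [Real.rpow_nonneg hρ0 (1/β), hδ0]
  set G : Set ℝ := {x | α < MHL f x} with hGdef
  set Lr : ℝ := (1-γ)*(volume E).toReal/(α-γ) + 1 with hLrdef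
  have hLr0 : 0 < Lr := by
    have : 0 ≤ (1-γ)*(volume E).toReal/(α-γ) :=
      div_nonneg (mul_nonneg (by linarith) ENNReal.toReal_nonneg) (by linarith)
    rw [hLrdef]; linarith
  have hkey : ∀ x ∈ G, ∃ a b : ℝ, a < b ∧ x ∈ Ioo a b ∧ (∀ y ∈ Ioo a b, α < MHL f y) ∧
      b - a ≤ Lr ∧ volume (Ioo a b \ E) ≤ ENNReal.ofReal ρ * volume (Ioo a b) :=
    fun x hx => key_interval hE h1 hγ hγα hα hfval hx
  have hGopen : IsOpen G := by
    rw [isOpen_iff_forall_mem_open]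
    intro x hx
    obtain ⟨a, b, hab, hx', hsub, -, -⟩ := hkey x hx
    exact ⟨Ioo a b, fun y hy => hsub y hy, isOpen_Ioo, hx'⟩
  -- covering estimate for compact subintervals of G
  have hIcc : ∀ u v : ℝ, u ≤ v → Icc u v ⊆ G → ∀ c d : ℝ,
      (∀ y ∈ Icc u v, ∃ a b : ℝ, a < b ∧ y ∈ Ioo a b ∧ Ioo a b ⊆ Ioo c d ∧
        volume (Ioo a b \ E) ≤ ENNReal.ofReal ρ * volume (Ioo a b)) →
      volume (Icc u v \ E) ≤ 2 * ENNReal.ofReal ρ * volume (Ioo c d) := by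
    intro u v huv hsubG c d hch
    have hchoice : ∀ y : Icc u v, ∃ p : ℝ × ℝ, p.1 < p.2 ∧ (y:ℝ) ∈ Ioo p.1 p.2 ∧
        Ioo p.1 p.2 ⊆ Ioo c d ∧
        volume (Ioo p.1 p.2 \ E) ≤ ENNReal.ofReal ρ * volume (Ioo p.1 p.2) := by
      intro y
      obtain ⟨a, b, h1', h2', h3', h4'⟩ := hch y y.2
      exact ⟨(a, b), h1', h2', h3', h4'⟩
    choose I hI1 hI2 hI3 hI4 using hchoice
    obtain ⟨t, ht⟩ := isCompact_Icc.elim_finite_subcover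
      (fun y : Icc u v => Ioo (I y).1 (I y).2) (fun _ => isOpen_Ioo)
      (fun z hz => mem_iUnion.mpr ⟨⟨z, hz⟩, hI2 _⟩)
    refine cover_bound (Icc u v) E c d ρ (t.image I) ?_ ?_ ?_
    · intro p hp
      obtain ⟨y, -, rfl⟩ := Finset.mem_image.mp hp
      exact hI3 y
    · intro p hp
      obtain ⟨y, -, rfl⟩ := Finset.mem_image.mp hp
      exact hI4 y
    · intro z hz
      obtain ⟨y, hyt, hzy⟩ := by simpa only [mem_iUnion] using ht hz
      exact mem_iUnion₂.mpr ⟨I y, Finset.mem_image_of_mem I hyt, hzy⟩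
  -- uniform length bound
  set K : ℝ := 2*(volume E).toReal + 2*Lr with hKdef
  have hlen : ∀ u v : ℝ, u ≤ v → Icc u v ⊆ G → v - u ≤ K := by
    intro u v huv hsub
    have h2 : volume (Icc u v \ E)
        ≤ 2 * ENNReal.ofReal ρ * volume (Ioo (u - Lr) (v + Lr)) := by
      refine hIcc u v huv hsub (u - Lr) (v + Lr) (fun y hy => ?_)
      obtain ⟨a, b, hab, hyab, -, hba, hvol⟩ := hkey y (hsub hy)
      refine ⟨a, b, hab, hyab, Ioo_subset_Ioo ?_ ?_, hvol⟩
      · have : a > y - Lr := by cases hyab; linarith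
        cases hy; linarith
      · have : b < y + Lr := by cases hyab; linarith
        cases hy; linarith
    have hfinIcc : volume (Icc u v) ≠ ⊤ := by
      rw [Real.volume_Icc]; exact ENNReal.ofReal_ne_top
    have e3 : (volume (Icc u v \ E)).toReal ≤ 2*ρ*(v - u + 2*Lr) := by
      have hrhs : (2 * ENNReal.ofReal ρ * volume (Ioo (u - Lr) (v + Lr))).toReal
          = 2*ρ*(v - u + 2*Lr) := by
        rw [Real.volume_Ioo, ENNReal.toReal_mul, ENNReal.toReal_mul,
          ENNReal.toReal_ofReal hρ0, ENNReal.toReal_ofReal (by linarith),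
          ENNReal.toReal_ofNat]
        ring
      rw [← hrhs]
      refine ENNReal.toReal_mono ?_ h2
      refine ENNReal.mul_ne_top (ENNReal.mul_ne_top (by norm_num) ENNReal.ofReal_ne_top) ?_
      rw [Real.volume_Ioo]; exact ENNReal.ofReal_ne_top
    have hsplit : volume (Icc u v ∩ E) + volume (Icc u v \ E) = volume (Icc u v) :=
      measure_inter_add_diff _ hE
    have e1 : (volume (Icc u v ∩ E)).toReal + (volume (Icc u v \ E)).toReal = v - u := by
      have h3 := congrArg ENNReal.toReal hsplit
      rwa [ENNReal.toReal_add
        (ne_top_of_le_ne_top hfinIcc (measure_mono inter_subset_left))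
        (ne_top_of_le_ne_top hfinIcc (measure_mono diff_subset)),
        Real.volume_Icc, ENNReal.toReal_ofReal (by linarith)] at h3
    have e2 : (volume (Icc u v ∩ E)).toReal ≤ (volume E).toReal :=
      ENNReal.toReal_mono (ne_of_lt h1) (measure_mono inter_subset_right)
    nlinarith [hLr0, hρ0]
  -- weighted measure
  set ν : Measure ℝ := volume.withDensity (fun x => ENNReal.ofReal (w x)) with hνdef
  have hνapply : ∀ s : Set ℝ, MeasurableSet s → ν s = ∫⁻ x in s, ENNReal.ofReal (w x) :=
    fun s hs => withDensity_apply _ hs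
  -- per-component bound
  have hcompbound : ∀ x ∈ G, ν (connectedComponentIn G x)
      ≤ ENNReal.ofReal ((1 - 4*δ)⁻¹) * ν (connectedComponentIn G x ∩ E) := by
    intro x hx
    set J := connectedComponentIn G x with hJdef
    have hxJ : x ∈ J := mem_connectedComponentIn hx
    have hJG : J ⊆ G := connectedComponentIn_subset _ _
    have hJopen : IsOpen J := hGopen.connectedComponentIn
    have hJord : OrdConnected J := isPreconnected_connectedComponentIn.ordConnected
    have hJlen : ∀ y ∈ J, ∀ z ∈ J, z - y ≤ K := by
      intro y hy z hz
      rcases le_total y z with h | h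
      · exact hlen y z h ((hJord.out hy hz).trans hJG)
      · have hK0 : 0 ≤ K := by
          rw [hKdef]; have := ENNReal.toReal_nonneg (a := volume E); linarith
        linarith
    have hbddA : BddAbove J := ⟨x + K, fun y hy => by have := hJlen x hxJ y hy; linarith⟩
    have hbddB : BddBelow J := ⟨x - K, fun y hy => by have := hJlen y hy x hxJ; linarith⟩
    have hJne : J.Nonempty := ⟨x, hxJ⟩
    set c : ℝ := sInf J with hcdef
    set d : ℝ := sSup J with hddef
    have hJIoo : J = Ioo c d := by
      apply Subset.antisymm
      · intro y hy
        obtain ⟨ε, hε, hball⟩ := Metric.isOpen_iff.mp hJopen y hy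
        rw [Real.ball_eq_Ioo] at hball
        have hy1 : y + ε/2 ∈ J := hball ⟨by linarith, by linarith⟩
        have hy2 : y - ε/2 ∈ J := hball ⟨by linarith, by linarith⟩
        constructor
        · exact lt_of_le_of_lt (csInf_le hbddB hy2) (by linarith)
        · exact lt_of_lt_of_le (by linarith : y < y + ε/2) (le_csSup hbddA hy1)
      · intro y hy
        obtain ⟨u, huJ, hu⟩ := exists_lt_of_csInf_lt hJne hy.1
        obtain ⟨v, hvJ, hv⟩ := exists_lt_of_lt_csSup hJne hy.2
        exact hJord.out huJ hvJ ⟨le_of_lt hu, le_of_lt hv⟩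
    have hxcd : x ∈ Ioo c d := hJIoo ▸ hxJ
    have hcd : c < d := hxcd.1.trans hxcd.2
    have hIoosubG : Ioo c d ⊆ G := hJIoo ▸ hJG
    -- covering bound for compact subsets of the component minus E
    have hmain : ∀ Kc : Set ℝ, IsCompact Kc → Kc ⊆ Ioo c d \ E →
        volume Kc ≤ 2 * ENNReal.ofReal ρ * volume (Ioo c d) := by
      intro Kc hKc hKsub
      rcases Kc.eq_empty_or_nonempty with rfl | hKne
      · simp
      set u : ℝ := sInf Kc with hudef
      set v : ℝ := sSup Kc with hvdef
      have huK : u ∈ Kc := hKc.sInf_mem hKne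
      have hvK : v ∈ Kc := hKc.sSup_mem hKne
      have huv : u ≤ v := csInf_le hKc.bddBelow hvK
      have huJ : u ∈ J := by rw [hJIoo]; exact (hKsub huK).1
      have hvJ : v ∈ J := by rw [hJIoo]; exact (hKsub hvK).1
      have hIccJ : Icc u v ⊆ Ioo c d := by
        rw [← hJIoo]; exact hJord.out huJ hvJ
      have hcover : volume (Icc u v \ E) ≤ 2 * ENNReal.ofReal ρ * volume (Ioo c d) := by
        refine hIcc u v huv (hIccJ.trans hIoosubG) c d (fun y hy => ?_)
        have hyJ : y ∈ J := by rw [hJIoo]; exact hIccJ hy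
        obtain ⟨a, b, hab, hyab, hIooG, -, hvol⟩ := hkey y (hJG hyJ)
        have hIooG' : Ioo a b ⊆ G := fun z hz => hIooG z hz
        have hIooJ : Ioo a b ⊆ J := by
          have h5 : Ioo a b ⊆ connectedComponentIn G y :=
            isPreconnected_Ioo.subset_connectedComponentIn hyab hIooG'
          exact h5.trans (connectedComponentIn_eq hyJ).symm.subset
        exact ⟨a, b, hab, hyab, hJIoo ▸ hIooJ, hvol⟩
      refine le_trans (measure_mono (fun k hk => ?_)) hcover
      exact ⟨⟨csInf_le hKc.bddBelow hk, le_csSup hKc.bddAbove hk⟩, (hKsub hk).2⟩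
    have hmeasJE : MeasurableSet (Ioo c d \ E) := measurableSet_Ioo.diff hE
    have hfinIoo : volume (Ioo c d) ≠ ⊤ := by
      rw [Real.volume_Ioo]; exact ENNReal.ofReal_ne_top
    have hfinJE : volume (Ioo c d \ E) ≠ ⊤ :=
      ne_top_of_le_ne_top hfinIoo (measure_mono diff_subset)
    have hvolJE : volume (Ioo c d \ E) ≤ 2 * ENNReal.ofReal ρ * volume (Ioo c d) := by
      refine ENNReal.le_of_forall_pos_le_add (fun ε hε hlt => ?_)
      obtain ⟨Kc, hKsub, hKc, hKlt⟩ := hmeasJE.exists_isCompact_lt_add hfinJE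
        (ε := (ε : ℝ≥0∞)) (by exact_mod_cast (ne_of_gt hε))
      calc volume (Ioo c d \ E) ≤ volume Kc + ε := le_of_lt hKlt
        _ ≤ 2 * ENNReal.ofReal ρ * volume (Ioo c d) + ε :=
            add_le_add_left (hmain Kc hKc hKsub) _
    -- apply the absorption hypothesis
    have hratio : (volume (Ioo c d \ E)).toReal / (d - c) ≤ 2*ρ := by
      have hrhs : (2 * ENNReal.ofReal ρ * volume (Ioo c d)).toReal = 2*ρ*(d-c) := by
        rw [Real.volume_Ioo, ENNReal.toReal_mul, ENNReal.toReal_mul,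
          ENNReal.toReal_ofReal hρ0, ENNReal.toReal_ofReal (by linarith),
          ENNReal.toReal_ofNat]
      have h6 : (volume (Ioo c d \ E)).toReal ≤ 2*ρ*(d-c) := by
        rw [← hrhs]
        exact ENNReal.toReal_mono
          (ENNReal.mul_ne_top (ENNReal.mul_ne_top (by norm_num) ENNReal.ofReal_ne_top)
            hfinIoo) hvolJE
      rw [div_le_iff₀ (by linarith)]
      nlinarith [hρ0]
    have hcoef2 : 2 * ((volume (Ioo c d \ E)).toReal / (d - c)) ^ (1/β) ≤ 4*δ := by
      have h0' : 0 ≤ (volume (Ioo c d \ E)).toReal / (d - c) :=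
        div_nonneg ENNReal.toReal_nonneg (by linarith)
      have h7 := Real.rpow_le_rpow h0' hratio (le_of_lt (by positivity : (0:ℝ) < 1/β))
      linarith [hcoef]
    have hh := habs c d hcd (Ioo c d \ E) diff_subset hmeasJE
    have hνJE : ν (Ioo c d \ E) ≤ ENNReal.ofReal (4*δ) * ν (Ioo c d) := by
      rw [hνapply _ hmeasJE, hνapply _ measurableSet_Ioo]
      exact le_trans hh (mul_le_mul_left (ENNReal.ofReal_le_ofReal hcoef2) _)
    have hνfin : ν (Ioo c d) ≠ ⊤ := by
      rw [hνapply _ measurableSet_Ioo]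
      have hint : IntegrableOn w (Icc c d) volume := hloc.integrableOn_isCompact isCompact_Icc
      have h8 : (∫⁻ x in Ioo c d, ENNReal.ofReal (w x)) ≤ ∫⁻ x in Icc c d, ENNReal.ofReal (w x) :=
        lintegral_mono_set Ioo_subset_Icc_self
      exact ne_top_of_le_ne_top (ne_of_lt hint.lintegral_lt_top) h8
    -- conclude component estimate
    have hsplitν : ν (Ioo c d ∩ E) + ν (Ioo c d \ E) = ν (Ioo c d) :=
      measure_inter_add_diff _ hE
    have h14δ : (0:ℝ) < 1 - 4*δ := by linarith
    have hXle : ν (Ioo c d) ≤ ν (Ioo c d ∩ E) + ENNReal.ofReal (4*δ) * ν (Ioo c d) :=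
      le_trans (le_of_eq hsplitν.symm) (add_le_add_right hνJE _)
    have hsum : ENNReal.ofReal (1-4*δ) * ν (Ioo c d) + ENNReal.ofReal (4*δ) * ν (Ioo c d)
        = ν (Ioo c d) := by
      rw [← add_mul, ← ENNReal.ofReal_add (by linarith) (by linarith)]
      have h11 : (1-4*δ) + 4*δ = 1 := by ring
      rw [h11, ENNReal.ofReal_one, one_mul]
    have hprodfin : ENNReal.ofReal (4*δ) * ν (Ioo c d) ≠ ⊤ :=
      ENNReal.mul_ne_top ENNReal.ofReal_ne_top hνfin
    have hsub2 : ENNReal.ofReal (1-4*δ) * ν (Ioo c d) ≤ ν (Ioo c d ∩ E) := by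
      have h10 : ENNReal.ofReal (1-4*δ) * ν (Ioo c d) + ENNReal.ofReal (4*δ) * ν (Ioo c d)
          ≤ ν (Ioo c d ∩ E) + ENNReal.ofReal (4*δ) * ν (Ioo c d) := by
        rw [hsum]; exact hXle
      exact ENNReal.le_of_add_le_add_right hprodfin h10
    have hfinal : ν (Ioo c d) ≤ ENNReal.ofReal ((1-4*δ)⁻¹) * ν (Ioo c d ∩ E) := by
      calc ν (Ioo c d) = ENNReal.ofReal ((1-4*δ)⁻¹) * (ENNReal.ofReal (1-4*δ) * ν (Ioo c d)) := by
            rw [← mul_assoc, ← ENNReal.ofReal_mul (inv_nonneg.mpr (by linarith)),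
              inv_mul_cancel₀ (ne_of_gt h14δ), ENNReal.ofReal_one, one_mul]
        _ ≤ ENNReal.ofReal ((1-4*δ)⁻¹) * ν (Ioo c d ∩ E) := mul_le_mul_right hsub2 _
    rw [hJIoo]
    exact hfinal
  -- sum over components
  set 𝒞 : Set (Set ℝ) := (fun x => connectedComponentIn G x) '' G with h𝒞def
  have hdisj : 𝒞.PairwiseDisjoint id := by
    rintro _ ⟨x, hx, rfl⟩ _ ⟨y, hy, rfl⟩ hne
    refine Set.disjoint_left.mpr (fun z hzx hzy => hne ?_)
    simp only [id] at hzx hzy ⊢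
    exact (connectedComponentIn_eq hzx).trans (connectedComponentIn_eq hzy).symm
  have hopen𝒞 : ∀ J ∈ 𝒞, IsOpen (id J) := by
    rintro _ ⟨x, hx, rfl⟩; exact hGopen.connectedComponentIn
  have hne𝒞 : ∀ J ∈ 𝒞, (id J).Nonempty := by
    rintro _ ⟨x, hx, rfl⟩; exact ⟨x, mem_connectedComponentIn hx⟩
  have hcount : 𝒞.Countable := hdisj.countable_of_isOpen hopen𝒞 hne𝒞
  have hGunion : G = ⋃ J ∈ 𝒞, J := by
    apply Subset.antisymm
    · intro x hx
      exact mem_iUnion₂.mpr ⟨connectedComponentIn G x, ⟨x, hx, rfl⟩,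
        mem_connectedComponentIn hx⟩
    · refine iUnion₂_subset ?_
      rintro _ ⟨x, hx, rfl⟩
      exact connectedComponentIn_subset _ _
  have hmeas𝒞 : ∀ J ∈ 𝒞, MeasurableSet J := fun J hJ => (hopen𝒞 J hJ).measurableSet
  have hdisj' : 𝒞.PairwiseDisjoint (fun J => J ∩ E) :=
    hdisj.mono (fun J => inter_subset_left)
  calc (∫⁻ x in G, ENNReal.ofReal (w x)) = ν G := (hνapply G hGopen.measurableSet).symm
    _ = ∑' J : 𝒞, ν J := by
        rw [hGunion]
        exact measure_biUnion hcount hdisj hmeas𝒞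
    _ ≤ ∑' J : 𝒞, ENNReal.ofReal ((1-4*δ)⁻¹) * ν ((J : Set ℝ) ∩ E) := by
        refine ENNReal.tsum_le_tsum (fun J => ?_)
        obtain ⟨x, hx, hJx⟩ := J.2
        have h12 := hcompbound x hx
        have hJx' : connectedComponentIn G x = (J : Set ℝ) := hJx
        rw [hJx'] at h12
        exact h12
    _ = ENNReal.ofReal ((1-4*δ)⁻¹) * ∑' J : 𝒞, ν ((J : Set ℝ) ∩ E) := ENNReal.tsum_mul_left
    _ = ENNReal.ofReal ((1-4*δ)⁻¹) * ν (⋃ J ∈ 𝒞, J ∩ E) := by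
        rw [measure_biUnion hcount hdisj' (fun J hJ => (hmeas𝒞 J hJ).inter hE)]
    _ ≤ ENNReal.ofReal ((1-4*δ)⁻¹) * ν E := by
        refine mul_le_mul_right (measure_mono ?_) _
        exact iUnion₂_subset (fun J hJ => inter_subset_right)
    _ = ENNReal.ofReal ((1-4*δ)⁻¹) * ∫⁻ x in E, ENNReal.ofReal (w x) := by
        rw [hνapply E hE]
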